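/- arXiv:2003.14317 — 4 statements merged into one kernel-verified Lean document; each statement's English description precedes it below -/
import Mathlib

section
/- If vertices (u1,u2,u3,u4) induce a C4 in G (with edges u1u2, u2u3, u3u4, u4u1 and non-edges u1u3, u2u4), then any edit set E ⊆ pairs({u1,u2,u3,u4}) whose application makes the four vertices induce a {C4,P4}-free graph must contain at least one of the diagonals {u1,u3}, {u2,u4}, or at least two of the four cycle edges. -/
open SimpleGraph

lemma embed_path4 {W : Type*} (H : SimpleGraph W) (a b c d : W)
    (hac : a ≠ c) (had : a ≠ d) (hbd : b ≠ d)
    (hab : H.Adj a b) (hbc : H.Adj b c) (hcd : H.Adj c d)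
    (nac : ¬ H.Adj a c) (nbd : ¬ H.Adj b d) (nad : ¬ H.Adj a d) :
    Nonempty (SimpleGraph.pathGraph 4 ↪g H) := by
  have nca : ¬ H.Adj c a := fun h => nac h.symm
  have ndb : ¬ H.Adj d b := fun h => nbd h.symm
  have nda : ¬ H.Adj d a := fun h => nad h.symm
  refine ⟨⟨⟨![a,b,c,d], ?_⟩, ?_⟩⟩
  · intro u v h
    fin_cases u <;> fin_cases v <;> simp_all [hab.ne, hbc.ne, hcd.ne, hab.ne', hbc.ne', hcd.ne']
  · intro u v
    change H.Adj (![a,b,c,d] u) (![a,b,c,d] v) ↔ _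
    fin_cases u <;> fin_cases v <;>
      simp [pathGraph_adj, hab, hbc, hcd, hab.symm, hbc.symm, hcd.symm, nac, nbd, nad,
        nca, ndb, nda] <;> decide

lemma embed_cycle4 {W : Type*} (H : SimpleGraph W) (a b c d : W)
    (hac : a ≠ c) (hbd : b ≠ d)
    (hab : H.Adj a b) (hbc : H.Adj b c) (hcd : H.Adj c d) (hda : H.Adj d a)
    (nac : ¬ H.Adj a c) (nbd : ¬ H.Adj b d) :
    Nonempty (SimpleGraph.cycleGraph 4 ↪g H) := by
  have nca : ¬ H.Adj c a := fun h => nac h.symm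
  have ndb : ¬ H.Adj d b := fun h => nbd h.symm
  refine ⟨⟨⟨![a,b,c,d], ?_⟩, ?_⟩⟩
  · intro u v h
    fin_cases u <;> fin_cases v <;> simp_all [hab.ne, hbc.ne, hcd.ne, hda.ne, hab.ne', hbc.ne', hcd.ne', hda.ne']
  · intro u v
    change H.Adj (![a,b,c,d] u) (![a,b,c,d] v) ↔ _
    fin_cases u <;> fin_cases v <;>
      simp [cycleGraph_adj', hab, hbc, hcd, hda, hab.symm, hbc.symm, hcd.symm, hda.symm,
        nac, nbd, nca, ndb] <;> decide



/-- Editing a simple graph at a set of vertex pairs: toggle adjacency on those pairs. -/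
def editGraph {V : Type*} (G : SimpleGraph V) (E : Set (Sym2 V)) : SimpleGraph V :=
  SimpleGraph.fromEdgeSet (symmDiff G.edgeSet E)

/-- Validity of the specialized ILP constraint for an induced `C₄`: any edit set on the
four vertices making them induce a `{C₄, P₄}`-free graph contains a diagonal or at
least two of the four cycle edges. -/
theorem c4_constraint_valid {V : Type*} [Fintype V] [DecidableEq V] (G : SimpleGraph V)
    (u₁ u₂ u₃ u₄ : V)
    (hne : u₁ ≠ u₂ ∧ u₁ ≠ u₃ ∧ u₁ ≠ u₄ ∧ u₂ ≠ u₃ ∧ u₂ ≠ u₄ ∧ u₃ ≠ u₄)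
    (h12 : G.Adj u₁ u₂) (h23 : G.Adj u₂ u₃) (h34 : G.Adj u₃ u₄) (h41 : G.Adj u₄ u₁)
    (h13 : ¬ G.Adj u₁ u₃) (h24 : ¬ G.Adj u₂ u₄)
    (E : Finset (Sym2 V))
    (hE : ∀ e ∈ E, ∀ v ∈ e, v ∈ ({u₁, u₂, u₃, u₄} : Set V))
    (hfree :
      IsEmpty (SimpleGraph.cycleGraph 4 ↪g
        (editGraph G (E : Set (Sym2 V))).induce ({u₁, u₂, u₃, u₄} : Set V)) ∧
      IsEmpty (SimpleGraph.pathGraph 4 ↪g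
        (editGraph G (E : Set (Sym2 V))).induce ({u₁, u₂, u₃, u₄} : Set V))) :
    s(u₁, u₃) ∈ E ∨ s(u₂, u₄) ∈ E ∨
      2 ≤ (E ∩ ({s(u₁, u₂), s(u₂, u₃), s(u₃, u₄), s(u₄, u₁)} : Finset (Sym2 V))).card := by
  obtain ⟨n12, n13, n14, n23, n24, n34⟩ := hne
  by_contra hcon
  push_neg at hcon
  obtain ⟨hd1, hd2, hcard⟩ := hcon
  set S : Set V := {u₁, u₂, u₃, u₄} with hS
  set H : SimpleGraph V := editGraph G (E : Set (Sym2 V)) with hH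
  -- adjacency characterizations in the edited graph
  have adj_iff : ∀ a b : V, H.Adj a b ↔
      s(a, b) ∈ symmDiff G.edgeSet (E : Set (Sym2 V)) ∧ a ≠ b := by
    intro a b; rw [hH, editGraph]; exact SimpleGraph.fromEdgeSet_adj _
  have edge_iff : ∀ a b : V, G.Adj a b → (H.Adj a b ↔ s(a, b) ∉ E) := by
    intro a b hab
    rw [adj_iff, Set.mem_symmDiff]
    simp [hab, hab.ne]
  have nonedge_iff : ∀ a b : V, a ≠ b → ¬ G.Adj a b → (H.Adj a b ↔ s(a, b) ∈ E) := by
    intro a b hab hnab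
    rw [adj_iff, Set.mem_symmDiff]
    simp [hab, hnab, SimpleGraph.mem_edgeSet]
  have nH13 : ¬ H.Adj u₁ u₃ := by rw [nonedge_iff _ _ n13 h13]; exact hd1
  have nH24 : ¬ H.Adj u₂ u₄ := by rw [nonedge_iff _ _ n24 h24]; exact hd2
  -- at most one cycle edge can be in E
  have hone : (E ∩ ({s(u₁, u₂), s(u₂, u₃), s(u₃, u₄), s(u₄, u₁)} : Finset (Sym2 V))).card ≤ 1 :=
    by omega
  have two_mem : ∀ e₁ e₂ : Sym2 V, e₁ ∈ E → e₂ ∈ E →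
      e₁ ∈ ({s(u₁, u₂), s(u₂, u₃), s(u₃, u₄), s(u₄, u₁)} : Finset (Sym2 V)) →
      e₂ ∈ ({s(u₁, u₂), s(u₂, u₃), s(u₃, u₄), s(u₄, u₁)} : Finset (Sym2 V)) →
      e₁ ≠ e₂ → False := by
    intro e₁ e₂ he₁ he₂ hm₁ hm₂ hne'
    have : 1 < (E ∩ ({s(u₁, u₂), s(u₂, u₃), s(u₃, u₄), s(u₄, u₁)} : Finset (Sym2 V))).card :=
      Finset.one_lt_card.mpr ⟨e₁, Finset.mem_inter.mpr ⟨he₁, hm₁⟩,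
        e₂, Finset.mem_inter.mpr ⟨he₂, hm₂⟩, hne'⟩
    omega
  -- vertices of the induced subgraph
  have m1 : u₁ ∈ S := by simp [hS]
  have m2 : u₂ ∈ S := by simp [hS]
  have m3 : u₃ ∈ S := by simp [hS]
  have m4 : u₄ ∈ S := by simp [hS]
  set v₁ : S := ⟨u₁, m1⟩
  set v₂ : S := ⟨u₂, m2⟩
  set v₃ : S := ⟨u₃, m3⟩
  set v₄ : S := ⟨u₄, m4⟩
  have iAdj : ∀ a b : S, (H.induce S).Adj a b ↔ H.Adj a b := fun a b => Iff.rfl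
  have sne : ∀ a b : V, a ≠ b → ∀ (ha : a ∈ S) (hb : b ∈ S),
      (⟨a, ha⟩ : S) ≠ ⟨b, hb⟩ := by
    intro a b h ha hb hc; exact h (congrArg Subtype.val hc)
  have niAdj13 : ¬ (H.induce S).Adj v₁ v₃ := nH13
  have niAdj24 : ¬ (H.induce S).Adj v₂ v₄ := nH24
  by_cases m12 : s(u₁, u₂) ∈ E <;> by_cases m23 : s(u₂, u₃) ∈ E <;>
    by_cases m34 : s(u₃, u₄) ∈ E <;> by_cases m41 : s(u₄, u₁) ∈ E
  -- kill all cases with two or more edited edges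
  all_goals try {
    first
    | exact two_mem _ _ m12 m23 (by simp) (by simp) (by simp [Sym2.eq_iff, n12, n13, n14, n23, n24, n34, n12.symm, n13.symm, n14.symm, n23.symm, n24.symm, n34.symm])
    | exact two_mem _ _ m12 m34 (by simp) (by simp)
        (by simp [Sym2.eq_iff, n12, n13, n14, n23, n24, n34, n12.symm, n13.symm, n14.symm, n23.symm, n24.symm, n34.symm])
    | exact two_mem _ _ m12 m41 (by simp) (by simp)
        (by simp [Sym2.eq_iff, n12, n13, n14, n23, n24, n34, n12.symm, n13.symm, n14.symm, n23.symm, n24.symm, n34.symm])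
    | exact two_mem _ _ m23 m34 (by simp) (by simp)
        (by simp [Sym2.eq_iff, n12, n13, n14, n23, n24, n34, n12.symm, n13.symm, n14.symm, n23.symm, n24.symm, n34.symm])
    | exact two_mem _ _ m23 m41 (by simp) (by simp)
        (by simp [Sym2.eq_iff, n12, n13, n14, n23, n24, n34, n12.symm, n13.symm, n14.symm, n23.symm, n24.symm, n34.symm])
    | exact two_mem _ _ m34 m41 (by simp) (by simp)
        (by simp [Sym2.eq_iff, n12, n13, n14, n23, n24, n34, n12.symm, n13.symm, n14.symm, n23.symm, n24.symm, n34.symm])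
  }
  -- remaining cases: adjacency facts for unedited edges
  all_goals {
    first
    | -- no edge edited: C4 remains
      exact hfree.1.false (Classical.choice (embed_cycle4 (H.induce S) v₁ v₂ v₃ v₄
        (sne _ _ n13 m1 m3) (sne _ _ n24 m2 m4)
        ((edge_iff _ _ h12).mpr m12) ((edge_iff _ _ h23).mpr m23)
        ((edge_iff _ _ h34).mpr m34) ((edge_iff _ _ h41).mpr m41)
        niAdj13 niAdj24))
    | -- u₁u₂ edited: path u₂-u₃-u₄-u₁
      exact hfree.2.false (Classical.choice (embed_path4 (H.induce S) v₂ v₃ v₄ v₁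
        (sne _ _ n24 m2 m4) (sne _ _ n12.symm m2 m1) (sne _ _ n13.symm m3 m1)
        ((edge_iff _ _ h23).mpr m23) ((edge_iff _ _ h34).mpr m34)
        ((edge_iff _ _ h41).mpr m41)
        niAdj24 (fun h => niAdj13 ((iAdj _ _).mpr ((iAdj _ _).mp h).symm))
        (fun h => (edge_iff _ _ h12).mp ((iAdj _ _).mp h).symm m12)))
    | -- u₂u₃ edited: path u₃-u₄-u₁-u₂
      exact hfree.2.false (Classical.choice (embed_path4 (H.induce S) v₃ v₄ v₁ v₂
        (sne _ _ n13.symm m3 m1) (sne _ _ n23.symm m3 m2) (sne _ _ n24.symm m4 m2)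
        ((edge_iff _ _ h34).mpr m34) ((edge_iff _ _ h41).mpr m41)
        ((edge_iff _ _ h12).mpr m12)
        (fun h => niAdj13 ((iAdj _ _).mpr ((iAdj _ _).mp h).symm))
        (fun h => niAdj24 ((iAdj _ _).mpr ((iAdj _ _).mp h).symm))
        (fun h => (edge_iff _ _ h23).mp ((iAdj _ _).mp h).symm m23)))
    | -- u₃u₄ edited: path u₄-u₁-u₂-u₃
      exact hfree.2.false (Classical.choice (embed_path4 (H.induce S) v₄ v₁ v₂ v₃
        (sne _ _ n24.symm m4 m2) (sne _ _ n34.symm m4 m3) (sne _ _ n13 m1 m3)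
        ((edge_iff _ _ h41).mpr m41) ((edge_iff _ _ h12).mpr m12)
        ((edge_iff _ _ h23).mpr m23)
        (fun h => niAdj24 ((iAdj _ _).mpr ((iAdj _ _).mp h).symm))
        niAdj13
        (fun h => (edge_iff _ _ h34).mp ((iAdj _ _).mp h).symm m34)))
    | -- u₄u₁ edited: path u₁-u₂-u₃-u₄
      exact hfree.2.false (Classical.choice (embed_path4 (H.induce S) v₁ v₂ v₃ v₄
        (sne _ _ n13 m1 m3) (sne _ _ n14 m1 m4) (sne _ _ n24 m2 m4)
        ((edge_iff _ _ h12).mpr m12) ((edge_iff _ _ h23).mpr m23)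
        ((edge_iff _ _ h34).mpr m34)
        niAdj13 niAdj24
        (fun h => (edge_iff _ _ h41).mp ((iAdj _ _).mp h).symm m41)))
  }
end

section
/- A graph G is {C4,P4}-free if and only if every nonempty connected induced subgraph of G contains a universal vertex (a vertex adjacent to all other vertices of that subgraph). -/
open SimpleGraph

private lemma c4_embed {V : Type*} (G : SimpleGraph V) {a b c d : V}
    (hab : G.Adj a b) (hbc : G.Adj b c) (hcd : G.Adj c d) (hda : G.Adj d a)
    (hac : ¬G.Adj a c) (hbd : ¬G.Adj b d) (hac' : a ≠ c) (hbd' : b ≠ d) :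
    Nonempty (SimpleGraph.cycleGraph 4 ↪g G) := by
  have nab := hab.ne
  have nbc := hbc.ne
  have ncd := hcd.ne
  have nda := hda.ne
  refine ⟨⟨⟨![a, b, c, d], ?_⟩, ?_⟩⟩
  · intro i j h
    fin_cases i <;> fin_cases j <;> simp_all
  · intro i j
    have hca : ¬G.Adj c a := fun h => hac h.symm
    have hdb : ¬G.Adj d b := fun h => hbd h.symm
    have had : G.Adj a d := hda.symm
    have hcb : G.Adj c b := hbc.symm
    have hba : G.Adj b a := hab.symm
    have hdc : G.Adj d c := hcd.symm
    show G.Adj (![a, b, c, d] i) (![a, b, c, d] j) ↔ _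
    fin_cases i <;> fin_cases j <;>
      simp (config := { decide := true }) [SimpleGraph.cycleGraph_adj, hab, hbc, hcd, hda,
        hac, hbd, hca, hdb, had, hcb, hba, hdc, G.irrefl]

private lemma p4_embed {V : Type*} (G : SimpleGraph V) {a b c d : V}
    (hab : G.Adj a b) (hbc : G.Adj b c) (hcd : G.Adj c d)
    (hac : ¬G.Adj a c) (hbd : ¬G.Adj b d) (had : ¬G.Adj a d)
    (hac' : a ≠ c) (hbd' : b ≠ d) (had' : a ≠ d) :
    Nonempty (SimpleGraph.pathGraph 4 ↪g G) := by
  have nab := hab.ne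
  have nbc := hbc.ne
  have ncd := hcd.ne
  refine ⟨⟨⟨![a, b, c, d], ?_⟩, ?_⟩⟩
  · intro i j h
    fin_cases i <;> fin_cases j <;> simp_all
  · intro i j
    have hca : ¬G.Adj c a := fun h => hac h.symm
    have hdb : ¬G.Adj d b := fun h => hbd h.symm
    have hda : ¬G.Adj d a := fun h => had h.symm
    have hcb : G.Adj c b := hbc.symm
    have hba : G.Adj b a := hab.symm
    have hdc : G.Adj d c := hcd.symm
    show G.Adj (![a, b, c, d] i) (![a, b, c, d] j) ↔ _
    fin_cases i <;> fin_cases j <;>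
      simp (config := { decide := true }) [SimpleGraph.pathGraph_adj, hab, hbc, hcd,
        hac, hbd, had, hca, hdb, hda, hcb, hba, hdc, G.irrefl]

private lemma key_forward {α : Type*} [Fintype α] (H : SimpleGraph α) (hc : H.Connected)
    (hC : IsEmpty (SimpleGraph.cycleGraph 4 ↪g H))
    (hP : IsEmpty (SimpleGraph.pathGraph 4 ↪g H)) :
    ∃ v, ∀ u, u ≠ v → H.Adj v u := by
  classical
  haveI hdec : DecidableRel H.Adj := Classical.decRel _
  have : Nonempty α := hc.nonempty
  obtain ⟨v, _, hv⟩ := Finset.exists_max_image Finset.univ (fun v => H.degree v) ⟨Classical.arbitrary α, Finset.mem_univ _⟩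
  by_contra hno
  push_neg at hno
  obtain ⟨u0, hu0ne, hu0⟩ := hno v
  -- minimize distance among non-neighbors of v
  have hS : ((Finset.univ : Finset α).filter (fun u => u ≠ v ∧ ¬H.Adj v u)).Nonempty :=
    ⟨u0, by simp [hu0ne, hu0]⟩
  obtain ⟨u, hu_mem, humin⟩ := Finset.exists_min_image _ (H.dist v) hS
  simp only [Finset.mem_filter, Finset.mem_univ, true_and] at hu_mem
  obtain ⟨hune, hunadj⟩ := hu_mem
  obtain ⟨p, hp⟩ := hc.exists_walk_length_eq_dist u v
  have hd0 : H.dist v u ≠ 0 := fun h => hune ((hc.dist_eq_zero_iff).mp h).symm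
  have hd1 : H.dist v u ≠ 1 := fun h => hunadj (SimpleGraph.dist_eq_one_iff_adj.mp h)
  have hplen : p.length = H.dist v u := by rw [hp, SimpleGraph.dist_comm]
  cases p with
  | nil => simp at hplen; exact hd0 (by simp)
  | @cons _ w _ huw q =>
    have hvw : H.Adj v w := by
      by_contra hnvw
      have hwv : w ≠ v := by
        rintro rfl
        exact hunadj huw.symm
      have hle : H.dist v w ≤ q.length := by
        rw [SimpleGraph.dist_comm]; exact SimpleGraph.dist_le q
      have := humin w (by simp [hwv, hnvw])
      simp only [SimpleGraph.Walk.length_cons] at hplen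
      omega
    have hwu : H.Adj w u := huw.symm
    -- find x adjacent to v, not adjacent to w, x ≠ w
    have hx : ∃ x, H.Adj v x ∧ ¬H.Adj w x ∧ x ≠ w := by
      by_contra hnx
      push_neg at hnx
      have hsub : insert u (insert v ((H.neighborFinset v).erase w)) ⊆ H.neighborFinset w := by
        intro y hy
        simp only [Finset.mem_insert, Finset.mem_erase] at hy
        rw [SimpleGraph.mem_neighborFinset]
        rcases hy with rfl | rfl | ⟨hyw, hy⟩
        · exact hwu
        · exact hvw.symm
        · by_contra hcon
          exact hyw (hnx y ((H.mem_neighborFinset v y).mp hy) hcon)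
      have h1 : v ∉ (H.neighborFinset v).erase w := by
        simp [SimpleGraph.mem_neighborFinset]
      have h2 : u ∉ insert v ((H.neighborFinset v).erase w) := by
        simp only [Finset.mem_insert, Finset.mem_erase, SimpleGraph.mem_neighborFinset]
        push_neg
        exact ⟨hune, fun _ => hunadj⟩
      have hcard := Finset.card_le_card hsub
      rw [Finset.card_insert_of_notMem h2, Finset.card_insert_of_notMem h1,
        Finset.card_erase_of_mem ((H.mem_neighborFinset v w).mpr hvw)] at hcard
      have hdegw : H.degree w ≤ H.degree v := hv w (Finset.mem_univ w)
      have hdegv1 : 1 ≤ H.degree v := by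
        rw [← SimpleGraph.card_neighborFinset_eq_degree]
        exact Finset.card_pos.mpr ⟨w, (H.mem_neighborFinset v w).mpr hvw⟩
      rw [SimpleGraph.card_neighborFinset_eq_degree] at hcard
      unfold SimpleGraph.degree at *
      omega
    obtain ⟨x, hvx, hnwx, hxw⟩ := hx
    have hxwn : ¬H.Adj x w := fun h => hnwx h.symm
    have hxu : x ≠ u := fun h => hunadj (h ▸ hvx)
    by_cases hadj : H.Adj x u
    · -- C4 : v x u w
      exact hC.elim' (c4_embed H hvx hadj hwu.symm hvw.symm hunadj hxwn hune.symm hxw).some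
    · -- P4 : x v w u
      exact hP.elim' (p4_embed H hvx.symm hvw huw.symm hxwn hunadj
        hadj hxw hune.symm hxu).some

private lemma cycle4_nu : ∀ i : Fin 4, ∃ j, j ≠ i ∧ ¬(SimpleGraph.cycleGraph 4).Adj i j := by
  decide

private lemma path4_nu : ∀ i : Fin 4, ∃ j, j ≠ i ∧ ¬(SimpleGraph.pathGraph 4).Adj i j := by
  simp only [SimpleGraph.pathGraph_adj]
  decide

private lemma no_embed {n : ℕ} (Hn : SimpleGraph (Fin (n + 1)))
    (hconn : Hn.Connected)
    (hnu : ∀ i : Fin (n + 1), ∃ j, j ≠ i ∧ ¬Hn.Adj i j)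
    {V : Type*} (G : SimpleGraph V)
    (huniv : ∀ W : Set V, (G.induce W).Connected →
      ∃ v : W, ∀ u : W, u ≠ v → (G.induce W).Adj v u) :
    IsEmpty (Hn ↪g G) := by
  constructor
  intro e
  set W : Set V := Set.range ⇑e with hW
  have e' : Hn ≃g G.induce W :=
    ⟨Equiv.ofInjective _ e.injective, by
      intro a b
      simp only [SimpleGraph.comap_adj, Function.Embedding.coe_subtype]
      exact e.map_adj_iff⟩
  have hWconn : (G.induce W).Connected := (SimpleGraph.Iso.connected_iff e').mp hconn
  obtain ⟨v, hvuniv⟩ := huniv W hWconn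
  obtain ⟨i, rfl⟩ := e'.surjective v
  obtain ⟨j, hji, hnadj⟩ := hnu i
  have hne : e' j ≠ e' i := fun h => hji (e'.injective h)
  have := hvuniv (e' j) hne
  exact hnadj (e'.map_rel_iff.mp this)

/-- Wolk's characterization: a finite graph is `{C₄, P₄}`-free iff every nonempty
connected induced subgraph has a universal vertex. -/
theorem quasiThreshold_iff_universal_in_connected_induced {V : Type*} [Fintype V]
    (G : SimpleGraph V) :
    (IsEmpty (SimpleGraph.cycleGraph 4 ↪g G) ∧ IsEmpty (SimpleGraph.pathGraph 4 ↪g G)) ↔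
      ∀ W : Set V, (G.induce W).Connected →
        ∃ v : W, ∀ u : W, u ≠ v → (G.induce W).Adj v u := by
  classical
  constructor
  · rintro ⟨hC, hP⟩ W hWconn
    have : Fintype ↥W := Fintype.ofFinite _
    have hC' : IsEmpty (SimpleGraph.cycleGraph 4 ↪g G.induce W) :=
      ⟨fun f => hC.elim' ((SimpleGraph.Embedding.induce W).comp f)⟩
    have hP' : IsEmpty (SimpleGraph.pathGraph 4 ↪g G.induce W) :=
      ⟨fun f => hP.elim' ((SimpleGraph.Embedding.induce W).comp f)⟩
    exact key_forward (G.induce W) hWconn hC' hP'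
  · intro huniv
    constructor
    · exact no_embed (SimpleGraph.cycleGraph 4) (SimpleGraph.cycleGraph_connected)
        cycle4_nu G huniv
    · exact no_embed (SimpleGraph.pathGraph 4) (SimpleGraph.pathGraph_connected 3)
        path4_nu G huniv
end

section
/- Packing lower bound with shared endpoint pairs for P4s: let S be a family of 4-tuples of vertices each inducing a P4 in G, such that for distinct members of S the sets of their five 'non-endpoint' vertex pairs (all pairs except the pair of the two degree-one vertices) are disjoint. Then any edit set making G {C4,P4}-free has size at least |S|. -/
/-- The five non-endpoint vertex pairs of a `P₄` `(a, b, c, d)`: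
all pairs except the endpoint pair `{a, d}`. -/
def fivePairs {V : Type*} [DecidableEq V] (t : V × V × V × V) : Finset (Sym2 V) :=
  {s(t.1, t.2.1), s(t.2.1, t.2.2.1), s(t.2.2.1, t.2.2.2),
   s(t.1, t.2.2.1), s(t.2.1, t.2.2.2)}

lemma editGraph_adj {V : Type*} (G : SimpleGraph V) (E : Set (Sym2 V)) (x y : V)
    (hxy : x ≠ y) :
    (editGraph G E).Adj x y ↔
      ((G.Adj x y ∧ s(x, y) ∉ E) ∨ (s(x, y) ∈ E ∧ ¬ G.Adj x y)) := by
  simp [editGraph, SimpleGraph.fromEdgeSet_adj, Set.mem_symmDiff, hxy]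

lemma inj4 {V : Type*} {a b c d : V} (hab : a ≠ b) (hac : a ≠ c) (had : a ≠ d)
    (hbc : b ≠ c) (hbd : b ≠ d) (hcd : c ≠ d) :
    Function.Injective ![a, b, c, d] := by
  intro i j h
  fin_cases i <;> fin_cases j <;> simp at h ⊢ <;>
    first
      | exact absurd h hab | exact absurd h hac | exact absurd h had
      | exact absurd h hbc | exact absurd h hbd | exact absurd h hcd
      | exact absurd h.symm hab | exact absurd h.symm hac | exact absurd h.symm had
      | exact absurd h.symm hbc | exact absurd h.symm hbd | exact absurd h.symm hcd

def c4_embed_s15 {V : Type*} (H : SimpleGraph V) (a b c d : V)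
    (Hab : H.Adj a b) (Hbc : H.Adj b c) (Hcd : H.Adj c d) (Had : H.Adj a d)
    (nHac : ¬ H.Adj a c) (nHbd : ¬ H.Adj b d)
    (hinj : Function.Injective ![a, b, c, d]) :
    SimpleGraph.cycleGraph 4 ↪g H := by
  have nHca : ¬ H.Adj c a := fun h => nHac h.symm
  have nHdb : ¬ H.Adj d b := fun h => nHbd h.symm
  refine ⟨⟨![a, b, c, d], hinj⟩, ?_⟩
  intro i j
  fin_cases i <;> fin_cases j <;>
    simp [Hab, Hbc, Hcd, Had, Hab.symm, Hbc.symm, Hcd.symm, Had.symm,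
      nHac, nHbd, nHca, nHdb, H.irrefl] <;> decide

def p4_embed_s15 {V : Type*} (H : SimpleGraph V) (a b c d : V)
    (Hab : H.Adj a b) (Hbc : H.Adj b c) (Hcd : H.Adj c d)
    (nHac : ¬ H.Adj a c) (nHbd : ¬ H.Adj b d) (nHad : ¬ H.Adj a d)
    (hinj : Function.Injective ![a, b, c, d]) :
    SimpleGraph.pathGraph 4 ↪g H := by
  have nHca : ¬ H.Adj c a := fun h => nHac h.symm
  have nHdb : ¬ H.Adj d b := fun h => nHbd h.symm
  have nHda : ¬ H.Adj d a := fun h => nHad h.symm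
  refine ⟨⟨![a, b, c, d], hinj⟩, ?_⟩
  intro i j
  fin_cases i <;> fin_cases j <;>
    simp [Hab, Hbc, Hcd, Hab.symm, Hbc.symm, Hcd.symm,
      nHac, nHbd, nHad, nHca, nHdb, nHda, H.irrefl,
      SimpleGraph.pathGraph_adj] <;> decide

/-- Packing lower bound with shared endpoint pairs: a family of induced `P₄`s whose
five non-endpoint pair sets are pairwise disjoint gives a lower bound on any edit set
making `G` `{C₄, P₄}`-free. -/
theorem p4_packing_shared_endpoints {V : Type*} [Fintype V] [DecidableEq V]
    (G : SimpleGraph V) (S : Finset (V × V × V × V))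
    (hind : ∀ t ∈ S, ∀ a b c d : V, t = (a, b, c, d) →
      (a ≠ b ∧ a ≠ c ∧ a ≠ d ∧ b ≠ c ∧ b ≠ d ∧ c ≠ d) ∧
      G.Adj a b ∧ G.Adj b c ∧ G.Adj c d ∧ ¬ G.Adj a c ∧ ¬ G.Adj a d ∧ ¬ G.Adj b d)
    (hdisj : ∀ t ∈ S, ∀ t' ∈ S, t ≠ t' → Disjoint (fivePairs t) (fivePairs t'))
    (E : Finset (Sym2 V))
    (hfree :
      IsEmpty (SimpleGraph.cycleGraph 4 ↪g editGraph G (E : Set (Sym2 V))) ∧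
      IsEmpty (SimpleGraph.pathGraph 4 ↪g editGraph G (E : Set (Sym2 V)))) :
    S.card ≤ E.card := by
  classical
  obtain ⟨hC4, hP4⟩ := hfree
  set H := editGraph G (E : Set (Sym2 V)) with hH
  have key : ∀ t ∈ S, (fivePairs t ∩ E).Nonempty := by
    intro t ht
    by_contra hne
    rw [Finset.not_nonempty_iff_eq_empty, Finset.eq_empty_iff_forall_notMem] at hne
    obtain ⟨a, b, c, d⟩ := t
    obtain ⟨⟨hab, hac, had, hbc, hbd, hcd⟩, Gab, Gbc, Gcd, nGac, nGad, nGbd⟩ :=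
      hind _ ht a b c d rfl
    have mem5 : ∀ p ∈ fivePairs (a, b, c, d), p ∉ E := by
      intro p hp hpE
      exact hne p (Finset.mem_inter.2 ⟨hp, hpE⟩)
    have e1 : s(a, b) ∉ E := mem5 _ (by simp [fivePairs])
    have e2 : s(b, c) ∉ E := mem5 _ (by simp [fivePairs])
    have e3 : s(c, d) ∉ E := mem5 _ (by simp [fivePairs])
    have e4 : s(a, c) ∉ E := mem5 _ (by simp [fivePairs])
    have e5 : s(b, d) ∉ E := mem5 _ (by simp [fivePairs])
    have Hab : H.Adj a b := (editGraph_adj G _ a b hab).2 (Or.inl ⟨Gab, by simpa using e1⟩)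
    have Hbc : H.Adj b c := (editGraph_adj G _ b c hbc).2 (Or.inl ⟨Gbc, by simpa using e2⟩)
    have Hcd : H.Adj c d := (editGraph_adj G _ c d hcd).2 (Or.inl ⟨Gcd, by simpa using e3⟩)
    have nHac : ¬ H.Adj a c := by
      intro h
      rcases (editGraph_adj G _ a c hac).1 h with ⟨h1, _⟩ | ⟨h1, _⟩
      · exact nGac h1
      · exact e4 (by simpa using h1)
    have nHbd : ¬ H.Adj b d := by
      intro h
      rcases (editGraph_adj G _ b d hbd).1 h with ⟨h1, _⟩ | ⟨h1, _⟩
      · exact nGbd h1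
      · exact e5 (by simpa using h1)
    have hinj : Function.Injective ![a, b, c, d] := inj4 hab hac had hbc hbd hcd
    by_cases hE : s(a, d) ∈ E
    · have Had : H.Adj a d :=
        (editGraph_adj G _ a d had).2 (Or.inr ⟨by simpa using hE, nGad⟩)
      exact hC4.elim (c4_embed_s15 H a b c d Hab Hbc Hcd Had nHac nHbd hinj)
    · have nHad : ¬ H.Adj a d := by
        intro h
        rcases (editGraph_adj G _ a d had).1 h with ⟨h1, _⟩ | ⟨h1, _⟩
        · exact nGad h1
        · exact hE (by simpa using h1)
      exact hP4.elim (p4_embed_s15 H a b c d Hab Hbc Hcd nHac nHbd nHad hinj)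
  have hdisj' : ∀ t ∈ S, ∀ t' ∈ S, t ≠ t' →
      Disjoint (fivePairs t ∩ E) (fivePairs t' ∩ E) := by
    intro t ht t' ht' htt'
    exact (hdisj t ht t' ht' htt').mono Finset.inter_subset_left Finset.inter_subset_left
  calc S.card = ∑ _t ∈ S, 1 := by simp
    _ ≤ ∑ t ∈ S, (fivePairs t ∩ E).card :=
        Finset.sum_le_sum fun t ht => Finset.card_pos.2 (key t ht)
    _ = (S.biUnion fun t => fivePairs t ∩ E).card :=
        (Finset.card_biUnion fun t ht t' ht' h => hdisj' t ht t' ht' h).symm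
    _ ≤ E.card := Finset.card_le_card (Finset.biUnion_subset.2 fun t _ =>
        Finset.inter_subset_right)
end

section
/- Every connected {C4,P4}-free graph on at least one vertex has a universal vertex. -/
section WolkAux

open SimpleGraph Finset

variable {V : Type*} (G : SimpleGraph V)

lemma p4emb {a b c d : V} (hab : G.Adj a b) (hbc : G.Adj b c) (hcd : G.Adj c d)
    (hac : ¬G.Adj a c) (had : ¬G.Adj a d) (hbd : ¬G.Adj b d)
    (nac : a ≠ c) (nad : a ≠ d) (nbd : b ≠ d) :
    Nonempty (SimpleGraph.pathGraph 4 ↪g G) := by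
  have hba := hab.symm; have hcb := hbc.symm; have hdc := hcd.symm
  have hca : ¬G.Adj c a := fun h => hac h.symm
  have hda : ¬G.Adj d a := fun h => had h.symm
  have hdb : ¬G.Adj d b := fun h => hbd h.symm
  have haa := G.irrefl (v := a); have hbb := G.irrefl (v := b)
  have hcc := G.irrefl (v := c); have hdd := G.irrefl (v := d)
  refine ⟨⟨![a, b, c, d], ?_⟩, ?_⟩
  · intro i j
    fin_cases i <;> fin_cases j <;>
      simp_all [hab.ne, hbc.ne, hcd.ne, hab.ne', hbc.ne', hcd.ne', nac, nad, nbd,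
        nac.symm, nad.symm, nbd.symm]
  · intro i j
    show G.Adj (![a, b, c, d] i) (![a, b, c, d] j) ↔ _
    fin_cases i <;> fin_cases j <;>
      first
        | decide
        | (simp_all [SimpleGraph.pathGraph_adj]; try decide)

lemma c4emb {a b c d : V} (hab : G.Adj a b) (hbc : G.Adj b c) (hcd : G.Adj c d)
    (hda : G.Adj d a) (hac : ¬G.Adj a c) (hbd : ¬G.Adj b d)
    (nac : a ≠ c) (nbd : b ≠ d) :
    Nonempty (SimpleGraph.cycleGraph 4 ↪g G) := by
  have hba := hab.symm; have hcb := hbc.symm; have hdc := hcd.symm; have had := hda.symm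
  have hca : ¬G.Adj c a := fun h => hac h.symm
  have hdb : ¬G.Adj d b := fun h => hbd h.symm
  have haa := G.irrefl (v := a); have hbb := G.irrefl (v := b)
  have hcc := G.irrefl (v := c); have hdd := G.irrefl (v := d)
  refine ⟨⟨![a, b, c, d], ?_⟩, ?_⟩
  · intro i j
    fin_cases i <;> fin_cases j <;>
      simp_all [hab.ne, hbc.ne, hcd.ne, hda.ne, hab.ne', hbc.ne', hcd.ne', hda.ne',
        nac, nbd, nac.symm, nbd.symm]
  · intro i j
    show G.Adj (![a, b, c, d] i) (![a, b, c, d] j) ↔ _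
    fin_cases i <;> fin_cases j <;>
      first
        | decide
        | (simp_all [SimpleGraph.cycleGraph_adj, Fin.ext_iff]; try decide)

end WolkAux



/-- Every connected `{C₄, P₄}`-free graph (on at least one vertex) has a universal
vertex. -/
theorem connected_quasiThreshold_has_universal {V : Type*} [Fintype V]
    (G : SimpleGraph V)
    (hfree : IsEmpty (SimpleGraph.cycleGraph 4 ↪g G) ∧
             IsEmpty (SimpleGraph.pathGraph 4 ↪g G))
    (hconn : G.Connected) :
    ∃ v : V, ∀ u : V, u ≠ v → G.Adj v u := by
  classical
  obtain ⟨hC4, hP4⟩ := hfree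
  obtain ⟨v₀⟩ := hconn.nonempty
  have hne : (Finset.univ : Finset V).Nonempty := ⟨v₀, Finset.mem_univ _⟩
  obtain ⟨v, -, hv⟩ := Finset.exists_max_image Finset.univ (fun x => G.degree x) hne
  have key : ∀ (u z : V) (p : G.Walk u z), z = v → u = v ∨ G.Adj v u := by
    intro u z p
    induction p with
    | nil => exact fun h => Or.inl h
    | @cons u w _ huw q ih =>
      intro hzv
      by_cases huv : u = v
      · exact Or.inl huv
      rcases ih hzv with rfl | hvw
      · exact Or.inr huw.symm
      by_cases hvu : G.Adj v u
      · exact Or.inr hvu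
      exfalso
      have hwu : G.Adj w u := huw.symm
      by_cases hx : ∃ x, G.Adj v x ∧ x ≠ w ∧ ¬G.Adj x w
      · obtain ⟨x, hvx, hxw, hxwn⟩ := hx
        have hxu : x ≠ u := fun h => hvu (h ▸ hvx)
        have nvu : v ≠ u := fun h => huv h.symm
        by_cases hxu' : G.Adj x u
        · exact hC4.false (c4emb G hvx.symm hvw hwu hxu'.symm hxwn hvu hxw nvu).some
        · exact hP4.false (p4emb G hvx.symm hvw hwu hxwn hxu' hvu hxw hxu nvu).some
      · push_neg at hx
        have hsub : insert v (insert u (G.neighborFinset v |>.erase w)) ⊆ G.neighborFinset w := by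
          intro y hy
          simp only [Finset.mem_insert, Finset.mem_erase] at hy
          rw [SimpleGraph.mem_neighborFinset]
          rcases hy with rfl | rfl | ⟨hyw, hy⟩
          · exact hvw.symm
          · exact huw.symm
          · exact (hx y (by rwa [SimpleGraph.mem_neighborFinset] at hy) hyw).symm
        have hvn : v ∉ insert u (G.neighborFinset v |>.erase w) := by
          simp only [Finset.mem_insert, Finset.mem_erase, SimpleGraph.mem_neighborFinset]
          rintro (rfl | ⟨-, h⟩)
          · exact huv rfl
          · exact G.irrefl h
        have hun : u ∉ (G.neighborFinset v |>.erase w) := by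
          simp only [Finset.mem_erase, SimpleGraph.mem_neighborFinset]
          rintro ⟨-, h⟩; exact hvu h
        have hwm : w ∈ G.neighborFinset v := by rwa [SimpleGraph.mem_neighborFinset]
        have hcard := Finset.card_le_card hsub
        rw [Finset.card_insert_of_notMem hvn, Finset.card_insert_of_notMem hun,
          Finset.card_erase_of_mem hwm] at hcard
        have hdw : G.degree w ≤ G.degree v := hv w (Finset.mem_univ w)
        have hpos : 0 < G.degree v := by
          rw [← SimpleGraph.card_neighborFinset_eq_degree]
          exact Finset.card_pos.mpr ⟨w, hwm⟩
        simp only [SimpleGraph.card_neighborFinset_eq_degree] at hcard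
        omega
  refine ⟨v, fun u hu => ?_⟩
  obtain ⟨p⟩ := hconn u v
  rcases key u v p rfl with rfl | h
  · exact absurd rfl hu
  · exact h
end
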